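/- arXiv:1807.03700 — 2 statements merged into one kernel-verified Lean document; each statement's English description precedes it below -/
import Mathlib

section
/- Let B ≠ 0 and u(x,t) be a solution of the heat equation ∂u/∂t = (1/2)∂²u/∂x². Suppose θ: ℝ → ℝ is twice differentiable with θ''(x) = (4Bx + 2C)θ(x). Then v(x,t) = θ(x)·exp((2B²/3)t³ − Ct − 2Bxt)·u(x − Bt², t) satisfies ∂v/∂t = (1/2)∂²v/∂x² − ∂/∂x(μ(x)v) wherever θ(x) ≠ 0, where μ(x) = θ'(x)/θ(x). -/
private lemma slice_x {F : ℝ × ℝ → ℝ} (hF : Differentiable ℝ F) (a b : ℝ) :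
    HasDerivAt (fun y => F (y, b)) (fderiv ℝ F (a, b) (1, 0)) a := by
  have h := (hF (a, b)).hasFDerivAt
  have hg : HasDerivAt (fun y : ℝ => (y, b)) (((1 : ℝ), (0 : ℝ)) : ℝ × ℝ) a :=
    (hasDerivAt_id a).prodMk (hasDerivAt_const a b)
  exact h.comp_hasDerivAt a hg

private lemma slice_t {F : ℝ × ℝ → ℝ} (hF : Differentiable ℝ F) (a b : ℝ) :
    HasDerivAt (fun s => F (a, s)) (fderiv ℝ F (a, b) (0, 1)) b := by
  have h := (hF (a, b)).hasFDerivAt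
  have hg : HasDerivAt (fun s : ℝ => (a, s)) (((0 : ℝ), (1 : ℝ)) : ℝ × ℝ) b :=
    (hasDerivAt_const b a).prodMk (hasDerivAt_id b)
  exact h.comp_hasDerivAt b hg

private lemma prod3 {f e r w : ℝ → ℝ} {f' e' r' w' x : ℝ}
    (hf : HasDerivAt f f' x) (he : HasDerivAt e e' x) (hr : HasDerivAt r r' x)
    (hw : HasDerivAt w w' (r x)) :
    HasDerivAt (fun y => f y * Real.exp (e y) * w (r y))
      (f' * Real.exp (e x) * w (r x) + f x * Real.exp (e x) * e' * w (r x)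
        + f x * Real.exp (e x) * (w' * r')) x := by
  have hW : HasDerivAt (fun y => w (r y)) (w' * r') x := hw.comp x hr
  have h := (hf.fun_mul he.exp).fun_mul hW
  refine h.congr_deriv ?_
  ring

/-- Intertwining of the family F₁ Fokker–Planck equation with the heat equation:
v(x,t) = θ(x) exp((2B²/3)t³ − Ct − 2Bxt) u(x − Bt², t) solves
v_t = (1/2)v_xx − (μ v)_x with μ = θ'/θ wherever θ ≠ 0. -/
theorem F1_to_heat_intertwining
    (B C : ℝ) (hB : B ≠ 0)
    (u : ℝ → ℝ → ℝ) (θ : ℝ → ℝ)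
    (hu : ContDiff ℝ 2 (Function.uncurry u))
    (hθ : ContDiff ℝ 2 θ)
    (hheat : ∀ x t : ℝ,
      deriv (fun s => u x s) t = (1/2) * deriv (deriv (fun y => u y t)) x)
    (hODE : ∀ x : ℝ, deriv (deriv θ) x = (4 * B * x + 2 * C) * θ x) :
    let v : ℝ → ℝ → ℝ := fun x t =>
      θ x * Real.exp (2 * B ^ 2 / 3 * t ^ 3 - C * t - 2 * B * x * t) * u (x - B * t ^ 2) t
    let μ : ℝ → ℝ := fun x => deriv θ x / θ x
    ∀ x t : ℝ, θ x ≠ 0 →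
      deriv (fun s => v x s) t
        = (1/2) * deriv (deriv (fun y => v y t)) x
          - deriv (fun y => μ y * v y t) x := by
  intro v μ x t hθx
  set U : ℝ × ℝ → ℝ := Function.uncurry u with hUdef
  have hU1 : Differentiable ℝ U := hu.differentiable (by norm_num)
  have hUxd : Differentiable ℝ (fun p => fderiv ℝ U p ((1:ℝ), (0:ℝ))) :=
    (((hu.fderiv_right (m := 1) (by norm_num)).clm_apply contDiff_const).differentiable (by norm_num))
  -- θ regularity
  have hθd : Differentiable ℝ θ := hθ.differentiable (by norm_num)
  have hθ1 : Differentiable ℝ (deriv θ) :=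
    ((hθ.fderiv_right (m := 1) (by norm_num)).clm_apply contDiff_const).differentiable (by norm_num)
  -- partial derivative dictionary
  have key_x : ∀ a b : ℝ, deriv (fun y => u y b) a = fderiv ℝ U (a, b) (1, 0) :=
    fun a b => (slice_x hU1 a b).deriv
  have key_t : ∀ a b : ℝ, deriv (fun s => u a s) b = fderiv ℝ U (a, b) (0, 1) :=
    fun a b => (slice_t hU1 a b).deriv
  have key_xx : ∀ a b : ℝ, deriv (deriv (fun y => u y b)) a
      = fderiv ℝ (fun q => fderiv ℝ U q (1, 0)) (a, b) (1, 0) := by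
    intro a b
    have h1 : deriv (fun y => u y b) = fun y => fderiv ℝ U (y, b) (1, 0) :=
      funext fun y => key_x y b
    rw [h1]
    exact (slice_x hUxd a b).deriv
  have hheat' : ∀ a b : ℝ, fderiv ℝ U (a, b) ((0:ℝ), (1:ℝ))
      = 1/2 * fderiv ℝ (fun q => fderiv ℝ U q (1, 0)) (a, b) (1, 0) := by
    intro a b
    rw [← key_t a b, ← key_xx a b]; exact hheat a b
  -- abbreviations (purely notational)
  -- exp-argument derivative in x, at any point
  have he : ∀ y : ℝ, HasDerivAt (fun y' => 2 * B ^ 2 / 3 * t ^ 3 - C * t - 2 * B * y' * t)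
      (-(2 * B * t)) y := by
    intro y
    have h := (((hasDerivAt_id y).const_mul (2 * B)).mul_const t).const_sub
      (2 * B ^ 2 / 3 * t ^ 3 - C * t)
    refine h.congr_deriv ?_
    ring
  have hru : ∀ y : ℝ, HasDerivAt (fun y' : ℝ => y' - B * t ^ 2) 1 y := by
    intro y
    simpa using (hasDerivAt_id y).sub_const (B * t ^ 2)
  have hw : ∀ y : ℝ, HasDerivAt (fun z => u z t) (fderiv ℝ U (y - B * t ^ 2, t) (1, 0))
      (y - B * t ^ 2) := fun y => slice_x hU1 (y - B * t ^ 2) t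
  have hwx : HasDerivAt (fun z => fderiv ℝ U (z, t) ((1:ℝ), (0:ℝ)))
      (fderiv ℝ (fun q => fderiv ℝ U q (1, 0)) (x - B * t ^ 2, t) (1, 0))
      (x - B * t ^ 2) := slice_x hUxd (x - B * t ^ 2) t
  -- t-derivative of v(x, ·)
  have hpoly : HasDerivAt (fun s : ℝ => 2 * B ^ 2 / 3 * s ^ 3 - C * s - 2 * B * x * s)
      (2 * B ^ 2 * t ^ 2 - C - 2 * B * x) t := by
    have h := (((hasDerivAt_pow 3 t).const_mul (2 * B ^ 2 / 3)).sub
      ((hasDerivAt_id t).const_mul C)).sub ((hasDerivAt_id t).const_mul (2 * B * x))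
    refine h.congr_deriv ?_
    push_cast
    ring
  have hr2 : HasDerivAt (fun s : ℝ => x - B * s ^ 2) (-(2 * B * t)) t := by
    have h := ((hasDerivAt_pow 2 t).const_mul B).const_sub x
    refine h.congr_deriv ?_
    push_cast
    ring
  have hpair : HasDerivAt (fun s : ℝ => ((x - B * s ^ 2, s) : ℝ × ℝ))
      ((-(2 * B * t), 1) : ℝ × ℝ) t := hr2.prodMk (hasDerivAt_id t)
  have hUc : HasDerivAt (fun s => U (x - B * s ^ 2, s))
      (fderiv ℝ U (x - B * t ^ 2, t) (-(2 * B * t), 1)) t :=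
    HasFDerivAt.comp_hasDerivAt (f := fun s : ℝ => ((x - B * s ^ 2, s) : ℝ × ℝ)) t
      (hU1 (x - B * t ^ 2, t)).hasFDerivAt hpair
  have hT : HasDerivAt
      (fun s => θ x * Real.exp (2 * B ^ 2 / 3 * s ^ 3 - C * s - 2 * B * x * s)
        * u (x - B * s ^ 2) s)
      (θ x * Real.exp (2 * B ^ 2 / 3 * t ^ 3 - C * t - 2 * B * x * t)
          * (2 * B ^ 2 * t ^ 2 - C - 2 * B * x) * u (x - B * t ^ 2) t
        + θ x * Real.exp (2 * B ^ 2 / 3 * t ^ 3 - C * t - 2 * B * x * t)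
          * fderiv ℝ U (x - B * t ^ 2, t) (-(2 * B * t), 1)) t := by
    have h := ((hasDerivAt_const t (θ x)).fun_mul hpoly.exp).fun_mul hUc
    refine h.congr_deriv ?_
    simp only [hUdef, Function.uncurry_apply_pair]
    ring
  -- x-derivative of v(·, t)
  have hVderiv : deriv (fun y => θ y * Real.exp (2 * B ^ 2 / 3 * t ^ 3 - C * t - 2 * B * y * t)
        * u (y - B * t ^ 2) t)
      = fun y => deriv θ y * Real.exp (2 * B ^ 2 / 3 * t ^ 3 - C * t - 2 * B * y * t)
          * u (y - B * t ^ 2) t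
        + -(2 * B * t) * (θ y * Real.exp (2 * B ^ 2 / 3 * t ^ 3 - C * t - 2 * B * y * t)
          * u (y - B * t ^ 2) t)
        + θ y * Real.exp (2 * B ^ 2 / 3 * t ^ 3 - C * t - 2 * B * y * t)
          * fderiv ℝ U (y - B * t ^ 2, t) (1, 0) := by
    funext y
    have h := prod3 (f := θ) (e := fun y' => 2 * B ^ 2 / 3 * t ^ 3 - C * t - 2 * B * y' * t)
      (r := fun y' => y' - B * t ^ 2) (w := fun z => u z t)
      (hθd y).hasDerivAt (he y) (hru y) (hw y)
    rw [h.deriv]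
    ring
  -- second x-derivative
  have hA : HasDerivAt (fun y => deriv θ y
        * Real.exp (2 * B ^ 2 / 3 * t ^ 3 - C * t - 2 * B * y * t) * u (y - B * t ^ 2) t)
      (deriv (deriv θ) x * Real.exp (2 * B ^ 2 / 3 * t ^ 3 - C * t - 2 * B * x * t)
          * u (x - B * t ^ 2) t
        + deriv θ x * Real.exp (2 * B ^ 2 / 3 * t ^ 3 - C * t - 2 * B * x * t)
          * -(2 * B * t) * u (x - B * t ^ 2) t
        + deriv θ x * Real.exp (2 * B ^ 2 / 3 * t ^ 3 - C * t - 2 * B * x * t)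
          * fderiv ℝ U (x - B * t ^ 2, t) (1, 0)) x := by
    have h := prod3 (f := deriv θ)
      (e := fun y' => 2 * B ^ 2 / 3 * t ^ 3 - C * t - 2 * B * y' * t)
      (r := fun y' => y' - B * t ^ 2) (w := fun z => u z t)
      (hθ1 x).hasDerivAt (he x) (hru x) (hw x)
    convert h using 1
    ring
  have hB2 : HasDerivAt (fun y => -(2 * B * t)
        * (θ y * Real.exp (2 * B ^ 2 / 3 * t ^ 3 - C * t - 2 * B * y * t)
          * u (y - B * t ^ 2) t))
      (-(2 * B * t) * (deriv θ x * Real.exp (2 * B ^ 2 / 3 * t ^ 3 - C * t - 2 * B * x * t)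
          * u (x - B * t ^ 2) t
        + θ x * Real.exp (2 * B ^ 2 / 3 * t ^ 3 - C * t - 2 * B * x * t)
          * -(2 * B * t) * u (x - B * t ^ 2) t
        + θ x * Real.exp (2 * B ^ 2 / 3 * t ^ 3 - C * t - 2 * B * x * t)
          * fderiv ℝ U (x - B * t ^ 2, t) (1, 0))) x := by
    have h := (prod3 (f := θ)
      (e := fun y' => 2 * B ^ 2 / 3 * t ^ 3 - C * t - 2 * B * y' * t)
      (r := fun y' => y' - B * t ^ 2) (w := fun z => u z t)
      (hθd x).hasDerivAt (he x) (hru x) (hw x)).const_mul (-(2 * B * t))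
    refine h.congr_deriv ?_
    ring
  have hC2 : HasDerivAt (fun y => θ y
        * Real.exp (2 * B ^ 2 / 3 * t ^ 3 - C * t - 2 * B * y * t)
        * fderiv ℝ U (y - B * t ^ 2, t) (1, 0))
      (deriv θ x * Real.exp (2 * B ^ 2 / 3 * t ^ 3 - C * t - 2 * B * x * t)
          * fderiv ℝ U (x - B * t ^ 2, t) (1, 0)
        + θ x * Real.exp (2 * B ^ 2 / 3 * t ^ 3 - C * t - 2 * B * x * t)
          * -(2 * B * t) * fderiv ℝ U (x - B * t ^ 2, t) (1, 0)
        + θ x * Real.exp (2 * B ^ 2 / 3 * t ^ 3 - C * t - 2 * B * x * t)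
          * fderiv ℝ (fun q => fderiv ℝ U q (1, 0)) (x - B * t ^ 2, t) (1, 0)) x := by
    have h := prod3 (f := θ)
      (e := fun y' => 2 * B ^ 2 / 3 * t ^ 3 - C * t - 2 * B * y' * t)
      (r := fun y' => y' - B * t ^ 2) (w := fun z => fderiv ℝ U (z, t) (1, 0))
      (hθd x).hasDerivAt (he x) (hru x) hwx
    convert h using 1
    ring
  have hXX := (hA.fun_add hB2).fun_add hC2
  -- μ-term
  have hMeq : (fun y => deriv θ y / θ y
        * (θ y * Real.exp (2 * B ^ 2 / 3 * t ^ 3 - C * t - 2 * B * y * t)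
          * u (y - B * t ^ 2) t))
      =ᶠ[nhds x] (fun y => deriv θ y
        * Real.exp (2 * B ^ 2 / 3 * t ^ 3 - C * t - 2 * B * y * t) * u (y - B * t ^ 2) t) := by
    filter_upwards [hθ.continuous.continuousAt.eventually_ne hθx] with y hy
    field_simp
  -- bridge to the goal
  have g1 : deriv (fun s => v x s) t
      = deriv (fun s => θ x * Real.exp (2 * B ^ 2 / 3 * s ^ 3 - C * s - 2 * B * x * s)
        * u (x - B * s ^ 2) s) t := rfl
  have g2 : deriv (fun y => v y t)
      = deriv (fun y => θ y * Real.exp (2 * B ^ 2 / 3 * t ^ 3 - C * t - 2 * B * y * t)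
        * u (y - B * t ^ 2) t) := rfl
  have g3 : deriv (fun y => μ y * v y t) x
      = deriv (fun y => deriv θ y / θ y
        * (θ y * Real.exp (2 * B ^ 2 / 3 * t ^ 3 - C * t - 2 * B * y * t)
          * u (y - B * t ^ 2) t)) x := rfl
  rw [g1, g2, g3, hT.deriv, hVderiv, hXX.deriv, hMeq.deriv_eq, hA.deriv,
    show fderiv ℝ U (x - B * t ^ 2, t) ((-(2 * B * t), 1) : ℝ × ℝ)
      = -(2 * B * t) * fderiv ℝ U (x - B * t ^ 2, t) (1, 0)
        + fderiv ℝ U (x - B * t ^ 2, t) (0, 1) by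
      have h : ((-(2 * B * t), 1) : ℝ × ℝ)
          = (-(2 * B * t)) • ((1 : ℝ), (0 : ℝ)) + ((0 : ℝ), (1 : ℝ)) := by
        simp [Prod.ext_iff]
      rw [h, map_add, map_smul, smul_eq_mul],
    hheat' (x - B * t ^ 2) t, hODE x]
  ring
end

section
/- Let δ > 1 and let u(x,t) solve the Fokker–Planck equation of the δ-dimensional Bessel process: ∂u/∂t = (1/2)∂²u/∂x² − ∂/∂x(((δ−1)/(2x))·u) on (0,∞) × (0,∞). Suppose θ: (0,∞) → ℝ is twice differentiable, nonvanishing, with θ''(x) = (2C + D/x²)θ(x) where D = ((δ−2)² − 1)/4. Then v(x,t) = θ(x)·x^{−(δ−1)/2}·e^{−Ct}·u(x,t) solves the Fokker–Planck equation ∂v/∂t = (1/2)∂²v/∂x² − ∂/∂x(μ(x)v) with μ(x) = θ'(x)/θ(x). -/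
/-- Intertwining of the family F₃ Fokker–Planck equation with that of the
δ-dimensional Bessel process: v(x,t) = θ(x) x^{−(δ−1)/2} e^{−Ct} u(x,t). -/
theorem F3_to_bessel_intertwining
    (δ C : ℝ) (hδ : 1 < δ)
    (u : ℝ → ℝ → ℝ) (θ : ℝ → ℝ)
    (hu : ContDiffOn ℝ 2 (Function.uncurry u) (Set.Ioi 0 ×ˢ Set.Ioi 0))
    (hθ : ContDiffOn ℝ 2 θ (Set.Ioi 0))
    (hθ0 : ∀ x : ℝ, 0 < x → θ x ≠ 0)
    (hODE : ∀ x : ℝ, 0 < x →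
      deriv (deriv θ) x = (2 * C + ((δ - 2) ^ 2 - 1) / 4 / x ^ 2) * θ x)
    (hbessel : ∀ x t : ℝ, 0 < x → 0 < t →
      deriv (fun s => u x s) t
        = (1/2) * deriv (deriv (fun y => u y t)) x
          - deriv (fun y => (δ - 1) / (2 * y) * u y t) x) :
    let v : ℝ → ℝ → ℝ := fun x t =>
      θ x * x ^ (-(δ - 1) / 2) * Real.exp (-C * t) * u x t
    let μ : ℝ → ℝ := fun x => deriv θ x / θ x
    ∀ x t : ℝ, 0 < x → 0 < t →
      deriv (fun s => v x s) t
        = (1/2) * deriv (deriv (fun y => v y t)) x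
          - deriv (fun y => μ y * v y t) x := by
  intro v μ x t hx ht
  show deriv (fun s => θ x * x ^ (-(δ - 1) / 2) * Real.exp (-C * s) * u x s) t
      = (1/2) * deriv (deriv (fun y => θ y * y ^ (-(δ - 1) / 2) * Real.exp (-C * t) * u y t)) x
        - deriv (fun y => (deriv θ y / θ y)
            * (θ y * y ^ (-(δ - 1) / 2) * Real.exp (-C * t) * u y t)) x
  set e : ℝ := -(δ - 1) / 2 with he
  set E : ℝ := Real.exp (-C * t) with hE
  -- regularity facts
  have hmem : ∀ {y : ℝ}, 0 < y → Set.Ioi (0:ℝ) ∈ nhds y := fun hy => isOpen_Ioi.mem_nhds hy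
  have hUc : ContDiffOn ℝ 2 (fun y => u y t) (Set.Ioi 0) := by
    have h1 : ContDiffOn ℝ 2 (fun y : ℝ => (y, t)) (Set.Ioi 0) :=
      (contDiff_id.prodMk contDiff_const).contDiffOn
    exact hu.comp h1 (fun y hy => ⟨hy, ht⟩)
  have hU1 : ContDiffOn ℝ 1 (deriv (fun y => u y t)) (Set.Ioi 0) :=
    hUc.deriv_of_isOpen isOpen_Ioi (by norm_num)
  have hθ1 : ContDiffOn ℝ 1 (deriv θ) (Set.Ioi 0) :=
    hθ.deriv_of_isOpen isOpen_Ioi (by norm_num)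
  have hθd : ∀ y : ℝ, 0 < y → HasDerivAt θ (deriv θ y) y := fun y hy =>
    ((hθ.differentiableOn (by norm_num)).differentiableAt (hmem hy)).hasDerivAt
  have hθd' : HasDerivAt (deriv θ) (deriv (deriv θ) x) x :=
    ((hθ1.differentiableOn (by norm_num)).differentiableAt (hmem hx)).hasDerivAt
  have hUd : ∀ y : ℝ, 0 < y → HasDerivAt (fun z => u z t) (deriv (fun z => u z t) y) y :=
    fun y hy => ((hUc.differentiableOn (by norm_num)).differentiableAt (hmem hy)).hasDerivAt
  have hUd' : HasDerivAt (deriv (fun z => u z t)) (deriv (deriv (fun z => u z t)) x) x :=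
    ((hU1.differentiableOn (by norm_num)).differentiableAt (hmem hx)).hasDerivAt
  have hpd : ∀ y : ℝ, 0 < y → HasDerivAt (fun z : ℝ => z ^ e) (e * y ^ (e - 1)) y :=
    fun y hy => (Real.hasStrictDerivAt_rpow_const_of_ne hy.ne' e).hasDerivAt
  have hpd' : HasDerivAt (fun z : ℝ => z ^ (e - 1)) ((e - 1) * x ^ (e - 1 - 1)) x :=
    (Real.hasStrictDerivAt_rpow_const_of_ne hx.ne' (e - 1)).hasDerivAt
  -- time derivative
  have hut : HasDerivAt (fun s => u x s) (deriv (fun s => u x s) t) t := by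
    have h2 : ContDiffAt ℝ 2 (Function.uncurry u) (x, t) :=
      hu.contDiffAt ((isOpen_Ioi.prod isOpen_Ioi).mem_nhds ⟨hx, ht⟩)
    have h3 : ContDiffAt ℝ 2 (fun s : ℝ => u x s) t :=
      h2.comp t (contDiffAt_const.prodMk contDiffAt_id)
    exact (h3.differentiableAt (by norm_num)).hasDerivAt
  have hEt : HasDerivAt (fun s : ℝ => Real.exp (-C * s)) (Real.exp (-C * t) * (-C * 1)) t :=
    (HasDerivAt.const_mul (-C) (hasDerivAt_id t)).exp
  have hLHS : deriv (fun s => θ x * x ^ e * Real.exp (-C * s) * u x s) t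
      = θ x * x ^ e * (Real.exp (-C * t) * (-C * 1)) * u x t
        + θ x * x ^ e * Real.exp (-C * t) * deriv (fun s => u x s) t := by
    exact ((hEt.const_mul (θ x * x ^ e)).mul hut).deriv
  -- first spatial derivative (in a neighborhood)
  set G : ℝ → ℝ := fun y =>
      (deriv θ y * y ^ e + θ y * (e * y ^ (e - 1))) * E * u y t
        + θ y * y ^ e * E * deriv (fun z => u z t) y with hGdef
  have hVy : ∀ y : ℝ, 0 < y → HasDerivAt (fun z => θ z * z ^ e * E * u z t) (G y) y := by
    intro y hy
    exact ((((hθd y hy).mul (hpd y hy)).mul_const E).mul (hUd y hy))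
  have hd1 : deriv (fun z => θ z * z ^ e * E * u z t) =ᶠ[nhds x] G := by
    filter_upwards [hmem hx] with y hy
    exact (hVy y hy).deriv
  have hd2 : deriv (deriv (fun z => θ z * z ^ e * E * u z t)) x = deriv G x := hd1.deriv_eq
  -- second spatial derivative
  have hGd : HasDerivAt G
      (((deriv (deriv θ) x * x ^ e + deriv θ x * (e * x ^ (e - 1)))
          + (deriv θ x * (e * x ^ (e - 1)) + θ x * (e * ((e - 1) * x ^ (e - 1 - 1))))) * E
            * u x t
        + (deriv θ x * x ^ e + θ x * (e * x ^ (e - 1))) * E * deriv (fun z => u z t) x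
        + ((deriv θ x * x ^ e + θ x * (e * x ^ (e - 1))) * E * deriv (fun z => u z t) x
            + θ x * x ^ e * E * deriv (deriv (fun z => u z t)) x)) x := by
    have hA : HasDerivAt (fun y => deriv θ y * y ^ e)
        (deriv (deriv θ) x * x ^ e + deriv θ x * (e * x ^ (e - 1))) x :=
      hθd'.mul (hpd x hx)
    have hB : HasDerivAt (fun y => θ y * (e * y ^ (e - 1)))
        (deriv θ x * (e * x ^ (e - 1)) + θ x * (e * ((e - 1) * x ^ (e - 1 - 1)))) x :=
      (hθd x hx).mul (hpd'.const_mul e)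
    have h1 := (((hA.add hB).mul_const E).mul (hUd x hx))
    have h2 := ((((hθd x hx).mul (hpd x hx)).mul_const E).mul hUd')
    exact h1.add h2
  -- drift term
  have hμv : (fun y => (deriv θ y / θ y) * (θ y * y ^ e * E * u y t))
      =ᶠ[nhds x] (fun y => deriv θ y * y ^ e * E * u y t) := by
    filter_upwards [hmem hx] with y hy
    field_simp [hθ0 y hy]
  have hdrift : deriv (fun y => (deriv θ y / θ y) * (θ y * y ^ e * E * u y t)) x
      = (deriv (deriv θ) x * x ^ e + deriv θ x * (e * x ^ (e - 1))) * E * u x t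
        + deriv θ x * x ^ e * E * deriv (fun z => u z t) x := by
    rw [hμv.deriv_eq]
    exact (((hθd'.mul (hpd x hx)).mul_const E).mul (hUd x hx)).deriv
  -- bessel drift derivative
  have hbd : deriv (fun y => (δ - 1) / (2 * y) * u y t) x
      = (0 * (2 * x) - (δ - 1) * 2) / (2 * x) ^ 2 * u x t
        + (δ - 1) / (2 * x) * deriv (fun z => u z t) x := by
    have h1 : HasDerivAt (fun y : ℝ => 2 * y) 2 x := by
      simpa using HasDerivAt.const_mul (2:ℝ) (hasDerivAt_id x)
    have h2 := (hasDerivAt_const x (δ - 1)).div h1 (by positivity)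
    exact (h2.mul (hUd x hx)).deriv
  -- assemble
  rw [hLHS, hd2, hGd.deriv, hdrift]
  have hb := hbessel x t hx ht
  rw [hbd] at hb
  rw [hb, hODE x hx]
  have hP1 : x ^ (e - 1) = x ^ e / x := by
    rw [Real.rpow_sub hx, Real.rpow_one]
  have hP2 : x ^ (e - 1 - 1) = x ^ e / x / x := by
    rw [Real.rpow_sub hx, Real.rpow_one, hP1]
  rw [hP1, hP2, he]
  have hxne : x ≠ 0 := hx.ne'
  have hEne : E ≠ 0 := Real.exp_ne_zero _
  simp only [hE, neg_mul]
  field_simp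
  ring
end
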